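/- Let 0 ≤ α < n and 0 < ε < 1, and let J ⊆ I ⊆ K be cubes in ℝⁿ with dist(J, ℝⁿ∖I) > (1/2) ℓ(J)^ε ℓ(I)^{1−ε}. Then for every positive locally finite Borel measure σ on ℝⁿ: P^α(J, 1_{K∖I} σ) ≤ C (ℓ(J)/ℓ(I))^{1 − ε(n+1−α)} P^α(I, 1_{K∖I} σ), with C depending only on n, α and ε. -/

import Mathlib

open MeasureTheory
open scoped ENNReal NNReal

noncomputable section

/-- An axis-parallel half-open cube in `ℝⁿ`, given by its corner `a` and side length `l`. -/
structure QCube (n : ℕ) where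
  a : Fin n → ℝ
  l : ℝ

/-- The half-open cube as a subset of `ℝⁿ`. -/
def QCube.pts {n : ℕ} (Q : QCube n) : Set (EuclideanSpace ℝ (Fin n)) :=
  {x | ∀ i, Q.a i ≤ x i ∧ x i < Q.a i + Q.l}

/-- The center of a cube. -/
def QCube.center {n : ℕ} (Q : QCube n) : EuclideanSpace ℝ (Fin n) :=
  (EuclideanSpace.equiv (Fin n) ℝ).symm fun i => Q.a i + Q.l / 2

/-- The concentric dilate `γQ` of a cube `Q`. -/
def QCube.dilate {n : ℕ} (Q : QCube n) (γ : ℝ) : QCube n :=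
  ⟨fun i => Q.a i + Q.l / 2 - γ * Q.l / 2, γ * Q.l⟩

/-- The `m`-weighted `α`-fractional Poisson integral
`P^α_m(Q,μ) = ∫ ℓ(Q)^m / (ℓ(Q)+|y−c_Q|)^{n+m−α} dμ(y)`; `P^α = P^α_1`. -/
def poissonM {n : ℕ} (α m : ℝ) (Q : QCube n)
    (μ : Measure (EuclideanSpace ℝ (Fin n))) : ℝ≥0∞ :=
  ∫⁻ y, ENNReal.ofReal (Q.l ^ m / (Q.l + dist y Q.center) ^ ((n : ℝ) + m - α)) ∂μ

/-- The key scalar inequality comparing the two Poisson kernels. -/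
lemma key_ineq (p ε A lJ lI dJ dI : ℝ) (hp : 0 < p) (hε0 : 0 < ε) (hε1 : ε < 1)
    (hlJ : 0 < lJ) (hlI : 0 < lI) (hJI : lJ ≤ lI) (hA : 0 ≤ A)
    (hdJ : 1/2 * lJ^ε * lI^(1-ε) ≤ dJ) (hdI : dI ≤ dJ + A * lI) (hdI0 : 0 ≤ dI) :
    lJ / (lJ + dJ)^p ≤ ((3*(1+A))^p * (lJ/lI)^(1 - ε*p)) * (lI / (lI + dI)^p) := by
  set t := lJ + dJ with ht
  set s := lI + dI with hs
  have haε : (0:ℝ) < lJ^ε := Real.rpow_pos_of_pos hlJ ε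
  have hbε : (0:ℝ) < lI^ε := Real.rpow_pos_of_pos hlI ε
  have hcε : (0:ℝ) < lI^(1-ε) := Real.rpow_pos_of_pos hlI (1-ε)
  have hdJ0 : 0 < dJ := lt_of_lt_of_le (by positivity) hdJ
  have htpos : 0 < t := by positivity
  have hspos : 0 < s := by positivity
  have hbc : lI^ε * lI^(1-ε) = lI := by
    rw [← Real.rpow_add hlI]; norm_num
  have hrε : (lI/lJ)^ε = lI^ε / lJ^ε := Real.div_rpow hlI.le hlJ.le ε
  have hr1 : 1 ≤ (lI/lJ)^ε := Real.one_le_rpow ((one_le_div hlJ).2 hJI) hε0.le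
  have hIt : lI ≤ 2 * (lI/lJ)^ε * t := by
    have h2 : lI * lJ^ε ≤ 2 * lI^ε * t := by
      nlinarith [mul_le_mul_of_nonneg_left hdJ hbε.le]
    calc lI = lI * lJ^ε / lJ^ε := by field_simp
    _ ≤ 2 * lI^ε * t / lJ^ε := by gcongr
    _ = 2 * (lI^ε/lJ^ε) * t := by ring
    _ = 2 * (lI/lJ)^ε * t := by rw [hrε]
  have hst : s ≤ 3*(1+A) * ((lI/lJ)^ε * t) := by
    have : s ≤ (1+A) * lI + t := by rw [hs, ht]; nlinarith
    nlinarith [mul_le_mul_of_nonneg_left hr1 (mul_nonneg (by linarith : (0:ℝ) ≤ 1+A) htpos.le)]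
  have hsp : s^p ≤ (3*(1+A))^p * ((lI/lJ)^(ε*p) * t^p) := by
    calc s^p ≤ (3*(1+A) * ((lI/lJ)^ε * t))^p := Real.rpow_le_rpow hspos.le hst hp.le
    _ = (3*(1+A))^p * (((lI/lJ)^ε)^p * t^p) := by
        rw [Real.mul_rpow (by positivity) (by positivity),
            Real.mul_rpow (by positivity) htpos.le]
    _ = (3*(1+A))^p * ((lI/lJ)^(ε*p) * t^p) := by
        rw [← Real.rpow_mul (by positivity)]
  have hCpos : (0:ℝ) < (3*(1+A))^p := Real.rpow_pos_of_pos (by linarith) p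
  have hkey : (lJ/lI)^(1 - ε*p) * lI = lJ * (lI/lJ)^(ε*p) := by
    have hr : (0:ℝ) < lJ/lI := by positivity
    have hmul : (lI/lJ)^(ε*p) * (lJ/lI)^(ε*p) = 1 := by
      rw [← Real.mul_rpow (by positivity) (by positivity)]
      rw [div_mul_div_comm]
      rw [show lI * lJ / (lJ * lI) = 1 by rw [mul_comm lI lJ]; field_simp]
      exact Real.one_rpow _
    have hinv : (lI/lJ)^(ε*p) = ((lJ/lI)^(ε*p))⁻¹ := eq_inv_of_mul_eq_one_left hmul
    rw [Real.rpow_sub hr, Real.rpow_one, hinv]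
    have hx : (0:ℝ) < (lJ/lI)^(ε*p) := Real.rpow_pos_of_pos hr _
    field_simp
  rw [mul_comm ((3*(1+A))^p * (lJ/lI)^(1 - ε*p)) _, div_mul_eq_mul_div,
    div_le_div_iff₀ (by positivity) (by positivity)]
  calc lJ * s^p ≤ lJ * ((3*(1+A))^p * ((lI/lJ)^(ε*p) * t^p)) :=
        mul_le_mul_of_nonneg_left hsp hlJ.le
  _ = (3*(1+A))^p * (lJ * (lI/lJ)^(ε*p)) * t^p := by ring
  _ = lI * ((3*(1+A))^p * (lJ/lI)^(1 - ε*p)) * t^p := by rw [← hkey]; ring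

lemma center_mem {n : ℕ} {Q : QCube n} (h : 0 < Q.l) : Q.center ∈ Q.pts := by
  intro i
  show Q.a i ≤ Q.a i + Q.l / 2 ∧ Q.a i + Q.l / 2 < Q.a i + Q.l
  constructor <;> linarith

lemma cube_sub {n : ℕ} {J I : QCube n} (hJ : 0 < J.l) (h : J.pts ⊆ I.pts) (i : Fin n) :
    I.a i ≤ J.a i ∧ J.a i + J.l ≤ I.a i + I.l := by
  have hcorner : ((EuclideanSpace.equiv (Fin n) ℝ).symm fun j => J.a j) ∈ J.pts :=
    fun j => ⟨le_refl _, by show J.a j < J.a j + J.l; linarith⟩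
  have h1 := h hcorner
  refine ⟨(h1 i).1, ?_⟩
  by_contra hcon
  push_neg at hcon
  have hup : J.a i < I.a i + I.l := (h1 i).2
  set δ := I.a i + I.l - J.a i with hδ
  have hδ0 : 0 < δ := by simp only [hδ]; linarith
  have hδl : δ < J.l := by simp only [hδ]; linarith
  have hx : ((EuclideanSpace.equiv (Fin n) ℝ).symm fun j => J.a j + δ) ∈ J.pts :=
    fun j => ⟨by show J.a j ≤ J.a j + δ; linarith, by show J.a j + δ < J.a j + J.l; linarith⟩
  have h2 : J.a i + δ < I.a i + I.l := ((h hx) i).2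
  simp only [hδ] at h2
  linarith

lemma center_dist {n : ℕ} {J I : QCube n} (hJ : 0 < J.l) (hI : 0 < I.l) (h : J.pts ⊆ I.pts) :
    dist J.center I.center ≤ Real.sqrt n * I.l := by
  have hco := fun i => cube_sub hJ h i
  have hcoord : ∀ i : Fin n, dist (J.center i) (I.center i) ^ 2 ≤ (I.l / 2) ^ 2 := by
    intro i
    have h1 := (hco i).1
    have h2 := (hco i).2
    have habs : |(J.a i + J.l / 2) - (I.a i + I.l / 2)| ≤ I.l / 2 := by
      rw [abs_le]; constructor <;> linarith
    have hd : dist (J.center i) (I.center i) = |(J.a i + J.l / 2) - (I.a i + I.l / 2)| := rfl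
    rw [hd]
    exact pow_le_pow_left₀ (abs_nonneg _) habs 2
  calc dist J.center I.center = Real.sqrt (∑ i, dist (J.center i) (I.center i) ^ 2) :=
        EuclideanSpace.dist_eq _ _
  _ ≤ Real.sqrt (∑ _i : Fin n, (I.l / 2) ^ 2) :=
      Real.sqrt_le_sqrt (Finset.sum_le_sum fun i _ => hcoord i)
  _ = Real.sqrt ((n : ℝ) * (I.l / 2) ^ 2) := by
      rw [Finset.sum_const, Finset.card_univ, Fintype.card_fin, nsmul_eq_mul]
  _ = Real.sqrt n * (I.l / 2) := by
      rw [Real.sqrt_mul (Nat.cast_nonneg n), Real.sqrt_sq (by positivity)]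
  _ ≤ Real.sqrt n * I.l := by
      have := Real.sqrt_nonneg (n : ℝ); nlinarith

/-- The fractional Poisson inequality: if `J ⊆ I ⊆ K` are cubes with
`dist(J, ℝⁿ∖I) > ½ ℓ(J)^ε ℓ(I)^{1−ε}`, then
`P^α(J, 1_{K∖I}σ) ≤ C (ℓ(J)/ℓ(I))^{1−ε(n+1−α)} P^α(I, 1_{K∖I}σ)` with `C = C(n,α,ε)`. -/
theorem statement10 (n : ℕ) (α ε : ℝ) (hn : 1 ≤ n) (hα0 : 0 ≤ α) (hαn : α < n)
    (hε0 : 0 < ε) (hε1 : ε < 1) :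
    ∃ C : ℝ, 0 < C ∧
      ∀ J I K : QCube n, 0 < J.l → 0 < I.l → 0 < K.l →
        J.pts ⊆ I.pts → I.pts ⊆ K.pts →
        ENNReal.ofReal (1 / 2 * J.l ^ ε * I.l ^ (1 - ε))
          < ⨅ (x ∈ J.pts) (y ∈ I.ptsᶜ), edist x y →
        ∀ σ : Measure (EuclideanSpace ℝ (Fin n)), IsLocallyFiniteMeasure σ →
          poissonM α 1 J (σ.restrict (K.pts \ I.pts))
            ≤ ENNReal.ofReal (C * (J.l / I.l) ^ (1 - ε * ((n : ℝ) + 1 - α)))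
              * poissonM α 1 I (σ.restrict (K.pts \ I.pts)) := by
  have hp : (0:ℝ) < (n : ℝ) + 1 - α := by
    have : (α:ℝ) < (n:ℝ) := hαn
    linarith
  set p : ℝ := (n : ℝ) + 1 - α with hpdef
  set A : ℝ := Real.sqrt n with hAdef
  have hA : 0 ≤ A := Real.sqrt_nonneg _
  set C : ℝ := (3 * (1 + A)) ^ p with hCdef
  have hC : 0 < C := Real.rpow_pos_of_pos (by linarith) p
  refine ⟨C, hC, ?_⟩
  intro J I K hJl hIl hKl hJI hIK hinf σ _
  have hJleI : J.l ≤ I.l := by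
    have h0 := cube_sub hJl hJI ⟨0, hn⟩
    linarith [h0.1, h0.2]
  have hdistc : dist J.center I.center ≤ A * I.l := center_dist hJl hIl hJI
  have hcJ : J.center ∈ J.pts := center_mem hJl
  set S := K.pts \ I.pts with hSdef
  -- pointwise kernel bound on S
  have hpt : ∀ y ∈ S,
      ENNReal.ofReal (J.l ^ (1:ℝ) / (J.l + dist y J.center) ^ ((n:ℝ) + 1 - α))
        ≤ ENNReal.ofReal (C * (J.l / I.l) ^ (1 - ε * ((n:ℝ) + 1 - α)))
          * ENNReal.ofReal (I.l ^ (1:ℝ) / (I.l + dist y I.center) ^ ((n:ℝ) + 1 - α)) := by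
    intro y hy
    have hyI : y ∈ I.ptsᶜ := hy.2
    have hlt : 1 / 2 * J.l ^ ε * I.l ^ (1 - ε) < dist y J.center := by
      have hle : (⨅ x ∈ J.pts, ⨅ z ∈ I.ptsᶜ, edist x z) ≤ edist J.center y :=
        le_trans (biInf_le _ hcJ) (biInf_le _ hyI)
      have := lt_of_lt_of_le hinf hle
      rw [edist_dist] at this
      have h' := (ENNReal.ofReal_lt_ofReal_iff_of_nonneg (by positivity)).1 this
      rwa [dist_comm] at h'
    have hdI : dist y I.center ≤ dist y J.center + A * I.l :=
      (dist_triangle y J.center I.center).trans (by linarith)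
    rw [← ENNReal.ofReal_mul (by positivity)]
    apply ENNReal.ofReal_le_ofReal
    simp only [Real.rpow_one]
    exact key_ineq p ε A J.l I.l (dist y J.center) (dist y I.center) hp hε0 hε1
      hJl hIl hJleI hA hlt.le hdI dist_nonneg
  have hgmeas : Measurable (fun y : EuclideanSpace ℝ (Fin n) =>
      ENNReal.ofReal (C * (J.l / I.l) ^ (1 - ε * ((n:ℝ) + 1 - α)))
        * ENNReal.ofReal (I.l ^ (1:ℝ) / (I.l + dist y I.center) ^ ((n:ℝ) + 1 - α))) := by
    apply Measurable.const_mul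
    apply (ENNReal.continuous_ofReal.comp ?_).measurable
    apply Continuous.div continuous_const
    · exact (continuous_const.add (continuous_id.dist continuous_const)).rpow_const
        (fun x => Or.inr hp.le)
    · intro x
      have := dist_nonneg (x := x) (y := I.center)
      positivity
  calc poissonM α 1 J (σ.restrict S)
      ≤ ∫⁻ y in S, (ENNReal.ofReal (C * (J.l / I.l) ^ (1 - ε * ((n:ℝ) + 1 - α)))
          * ENNReal.ofReal (I.l ^ (1:ℝ) / (I.l + dist y I.center) ^ ((n:ℝ) + 1 - α))) ∂σ :=
        setLIntegral_mono hgmeas hpt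
  _ = ENNReal.ofReal (C * (J.l / I.l) ^ (1 - ε * ((n:ℝ) + 1 - α)))
        * poissonM α 1 I (σ.restrict S) :=
      lintegral_const_mul' _ _ ENNReal.ofReal_ne_top
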